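/- For every ρ ∈ (0,1] there exists ξ0 > 0 such that for every ξ ∈ (0, ξ0] there exists m0 ∈ ℕ with the following property: if m ≥ m0 is even and G is an m-vertex graph that is upper (ρ, ξ)-regular and every vertex v of G satisfies d_G(v) ≥ 3ρm/4, then G has a perfect matching. -/

import Mathlib

open Finset

/-- The number of edges of a graph `G` between two (disjoint) vertex sets `S` and `T`. -/
def edgesBetween {V : Type*} [DecidableEq V] (G : SimpleGraph V) [DecidableRel G.Adj]
    (S T : Finset V) : ℕ :=
  ((S ×ˢ T).filter fun p => G.Adj p.1 p.2).card

/-- A graph `G` on `m` vertices is *upper `(ρ, ξ)`-regular* if for all disjoint vertex sets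
`S, T` of size at least `ξm`, the number of edges between `S` and `T` is at most
`(ρ + ξ)|S||T|`. -/
def UpperRegular {m : ℕ} (G : SimpleGraph (Fin m)) [DecidableRel G.Adj] (ρ ξ : ℝ) : Prop :=
  ∀ S T : Finset (Fin m), Disjoint S T →
    ξ * m ≤ (S.card : ℝ) → ξ * m ≤ (T.card : ℝ) →
    (edgesBetween G S T : ℝ) ≤ (ρ + ξ) * S.card * T.card


set_option maxHeartbeats 1000000

open Function

namespace RegPM



variable {V : Type*} 

/-- From a fixed-point-free adjacency involution, get a perfect matching. -/
lemma pm_of_involutive (G : SimpleGraph V) (σ : V → V) (hinv : Function.Involutive σ)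
    (hadj : ∀ v, G.Adj v (σ v)) : ∃ M : SimpleGraph.Subgraph G, M.IsPerfectMatching := by
  refine ⟨⟨Set.univ, fun v w => σ v = w, ?_, ?_, ?_⟩, ?_, fun v => trivial⟩
  · rintro v w rfl; exact hadj v
  · intro v w _; trivial
  · refine ⟨?_⟩; rintro v w rfl; exact hinv v
  · intro v _
    refine ⟨σ v, rfl, fun y hy => ?_⟩
    simp only [SimpleGraph.Subgraph.Adj] at hy
    exact hy.symm

/-- From a perfect matching, get a fixed-point-free adjacency involution. -/
lemma involutive_of_pm {G : SimpleGraph V} {M : SimpleGraph.Subgraph G}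
    (hM : M.IsPerfectMatching) : ∃ σ : V → V, Function.Involutive σ ∧ ∀ v, G.Adj v (σ v) := by
  rw [SimpleGraph.Subgraph.isPerfectMatching_iff] at hM
  choose σ h1 h2 using hM
  refine ⟨σ, fun v => ?_, fun v => M.adj_sub (h1 v)⟩
  exact (h2 (σ v) v ((h1 v).symm)).symm




variable {V : Type*} [DecidableEq V]

/-- Any finset of even cardinality admits a fixed-point-free pairing supported on it. -/
lemma exists_pairing : ∀ (S : Finset V), Even S.card →
    ∃ p : V → V, (∀ a ∈ S, p a ∈ S ∧ p a ≠ a ∧ p (p a) = a) ∧ ∀ a ∉ S, p a = a := by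
  intro S
  induction S using Finset.strongInduction with
  | _ S ih =>
    intro hev
    rcases Finset.eq_empty_or_nonempty S with rfl | ⟨a, ha⟩
    · exact ⟨id, by simp, by simp⟩
    · have h2 : 1 < S.card := by
        rcases hev with ⟨k, hk⟩
        have : 0 < S.card := Finset.card_pos.mpr ⟨a, ha⟩
        omega
      obtain ⟨b, hb, hba⟩ := Finset.exists_mem_ne h2 a
      have hsub : S \ {a, b} ⊂ S := by
        apply Finset.sdiff_ssubset _ (by simp)
        intro x hx; simp at hx; rcases hx with rfl | rfl <;> assumption
      have hev' : Even (S \ {a, b}).card := by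
        have hcard : ({a, b} : Finset V) ⊆ S := by
          intro x hx; simp at hx; rcases hx with rfl | rfl <;> assumption
        rw [Finset.card_sdiff_of_subset hcard, Finset.card_pair (Ne.symm hba)]
        rcases hev with ⟨k, hk⟩
        exact ⟨k - 1, by omega⟩
      obtain ⟨p, hp1, hp2⟩ := ih _ hsub hev'
      refine ⟨fun x => if x = a then b else if x = b then a else p x, fun v hv => ?_, fun v hv => ?_⟩
      · beta_reduce
        by_cases hva : v = a
        · subst hva
          rw [if_pos rfl]
          exact ⟨hb, hba, by rw [if_neg hba, if_pos rfl]⟩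
        · by_cases hvb : v = b
          · subst hvb
            rw [if_neg hva, if_pos rfl]
            exact ⟨ha, Ne.symm hba, by rw [if_pos rfl]⟩
          · have hvS : v ∈ S \ {a, b} := by simp [hv, hva, hvb]
            obtain ⟨h1, h2', h3⟩ := hp1 v hvS
            have hpa : p v ≠ a := by
              intro h; rw [h] at h1; simp at h1
            have hpb : p v ≠ b := by
              intro h; rw [h] at h1; simp at h1
            rw [if_neg hva, if_neg hvb, if_neg hpa, if_neg hpb, h3]
            refine ⟨(Finset.sdiff_subset) h1, h2', rfl⟩
      · beta_reduce
        have hva : v ≠ a := fun h => hv (h ▸ ha)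
        have hvb : v ≠ b := fun h => hv (h ▸ hb)
        rw [if_neg hva, if_neg hvb]
        exact hp2 v (fun h => hv (Finset.sdiff_subset h))

/-- A partition of the vertex set into even cliques yields a fixed-point-free
adjacency involution. -/
lemma invol_of_partition (G : SimpleGraph V) (parts : Finset (Finset V))
    (hcover : ∀ v : V, ∃! P, P ∈ parts ∧ v ∈ P)
    (heven : ∀ P ∈ parts, Even P.card)
    (hclique : ∀ P ∈ parts, ∀ a ∈ P, ∀ b ∈ P, a ≠ b → G.Adj a b) :
    ∃ σ : V → V, Function.Involutive σ ∧ ∀ v, G.Adj v (σ v) := by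
  classical
  choose part hpart huniq using fun v => (hcover v).exists
  have huniq' : ∀ v (P : Finset V), P ∈ parts → v ∈ P → P = part v := by
    intro v P hP hvP
    exact ((hcover v).unique ⟨hP, hvP⟩ ⟨hpart v, huniq v⟩ : P = part v)
  set pp : Finset V → (V → V) := fun P => if h : Even P.card then (exists_pairing P h).choose else id with hpp
  have hppspec : ∀ P ∈ parts, (∀ a ∈ P, pp P a ∈ P ∧ pp P a ≠ a ∧ pp P (pp P a) = a) := by
    intro P hP
    have hev := heven P hP
    simp only [hpp, dif_pos hev]
    exact (exists_pairing P hev).choose_spec.1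
  refine ⟨fun v => pp (part v) v, fun v => ?_, fun v => ?_⟩
  · beta_reduce
    obtain ⟨h1, h2, h3⟩ := hppspec (part v) (hpart v) v (huniq v)
    have heq : part (pp (part v) v) = part v := (huniq' _ _ (hpart v) h1).symm
    rw [heq]
    exact h3
  · beta_reduce
    obtain ⟨h1, h2, h3⟩ := hppspec (part v) (hpart v) v (huniq v)
    exact hclique _ (hpart v) _ (huniq v) _ h1 (Ne.symm h2)




variable {V : Type*}

/-- The alternating walk: start at `x`, apply `σ2`, then `σ1`, then `σ2`, ... -/
def pmF (σ1 σ2 : V → V) (x : V) : ℕ → V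
  | 0 => x
  | (n+1) => if Even n then σ2 (pmF σ1 σ2 x n) else σ1 (pmF σ1 σ2 x n)

variable {σ1 σ2 : V → V} {x : V}

lemma pmF_succ_even {a : ℕ} (h : Even a) :
    pmF σ1 σ2 x (a+1) = σ2 (pmF σ1 σ2 x a) := by simp [pmF, h]

lemma pmF_succ_odd {a : ℕ} (h : ¬ Even a) :
    pmF σ1 σ2 x (a+1) = σ1 (pmF σ1 σ2 x a) := by simp [pmF, h]

lemma pmF_sigma2_even (h2 : Involutive σ2) {a : ℕ} (h : Even a) :
    σ2 (pmF σ1 σ2 x a) = pmF σ1 σ2 x (a+1) := by rw [pmF_succ_even h]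

lemma pmF_sigma2_odd (h2 : Involutive σ2) {a : ℕ} (h : ¬ Even a) (ha : 0 < a) :
    σ2 (pmF σ1 σ2 x a) = pmF σ1 σ2 x (a-1) := by
  obtain ⟨b, rfl⟩ : ∃ b, a = b + 1 := ⟨a - 1, by omega⟩
  have hb : Even b := by simp [Nat.even_add_one] at h; exact h
  rw [pmF_succ_even hb]
  simp [h2 _]

lemma pmF_sigma1_odd (h1 : Involutive σ1) {a : ℕ} (h : ¬ Even a) :
    σ1 (pmF σ1 σ2 x a) = pmF σ1 σ2 x (a+1) := by rw [pmF_succ_odd h]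

lemma pmF_sigma1_even (h1 : Involutive σ1) {a : ℕ} (h : Even a) (ha : 0 < a) :
    σ1 (pmF σ1 σ2 x a) = pmF σ1 σ2 x (a-1) := by
  obtain ⟨b, rfl⟩ : ∃ b, a = b + 1 := ⟨a - 1, by omega⟩
  have hb : ¬ Even b := by simpa [Nat.even_add_one] using h
  rw [pmF_succ_odd hb]
  simp [h1 _]

lemma pmF_two_mul (j : ℕ) : pmF σ1 σ2 x (2*j) = (σ1 ∘ σ2)^[j] x := by
  induction j with
  | zero => rfl
  | succ n ihn =>
      have h1 : 2*(n+1) = (2*n+1)+1 := by ring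
      rw [h1, pmF_succ_odd (by simp [Nat.even_add_one, parity_simps]),
        pmF_succ_even (by simp), ihn, Function.iterate_succ_apply']
      rfl

section Inj

variable (h1 : Involutive σ1) (h2 : Involutive σ2)
  (hfp1 : ∀ v, σ1 v ≠ v) (hfp2 : ∀ v, σ2 v ≠ v)
  {J : ℕ} (hJpos : 0 < J) (hJ : (σ1 ∘ σ2)^[J] x = x)
  (hJmin : ∀ n, 0 < n → n < J → (σ1 ∘ σ2)^[n] x ≠ x)

include h1 h2 hfp1 hfp2 hJpos hJ hJmin

lemma pmF_inj : ∀ b, b < 2*J → ∀ a, a < b → pmF σ1 σ2 x a ≠ pmF σ1 σ2 x b := by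
  intro b
  induction b using Nat.strong_induction_on with
  | _ b ih =>
    intro hbL a hab heq
    rcases Nat.eq_zero_or_pos a with rfl | hapos
    · -- a = 0
      rcases Nat.even_or_odd b with hbe | hbo
      · obtain ⟨j, rfl⟩ := hbe
        have hj : j + j = 2 * j := by ring
        rw [hj, pmF_two_mul] at heq
        exact hJmin j (by omega) (by omega) heq.symm
      · have hb1 : b ≠ 1 := by
          rintro rfl
          have : pmF σ1 σ2 x 1 = σ2 x := pmF_succ_even (by simp)
          rw [this] at heq
          exact hfp2 x heq.symm
        have hb3 : 3 ≤ b := by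
          rcases hbo with ⟨c, hc⟩; omega
        have hback : pmF σ1 σ2 x (b-1) = σ2 (pmF σ1 σ2 x b) := by
          have he : Even (b-1) := by rcases hbo with ⟨c, hc⟩; exact ⟨c, by omega⟩
          have := pmF_sigma2_even (σ1 := σ1) (x := x) h2 he
          rw [show b - 1 + 1 = b by omega] at this
          rw [← this, h2 _]
        rw [← heq] at hback
        have h1' : pmF σ1 σ2 x 1 = σ2 x := pmF_succ_even (by simp)
        have : pmF σ1 σ2 x 1 = pmF σ1 σ2 x (b-1) := by
          rw [h1', hback]; rfl
        exact ih (b-1) (by omega) (by omega) 1 (by omega) this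
    · -- a ≥ 1
      rcases Nat.eq_or_lt_of_le (Nat.succ_le_of_lt hab) with hb | hlt
      · -- b = a + 1
        rcases Nat.even_or_odd a with hae | hao
        · have : pmF σ1 σ2 x b = σ2 (pmF σ1 σ2 x a) := by rw [← hb]; exact pmF_succ_even hae
          rw [this] at heq
          exact hfp2 _ heq.symm
        · have : pmF σ1 σ2 x b = σ1 (pmF σ1 σ2 x a) := by
            rw [← hb]; exact pmF_succ_odd (by simpa [Nat.odd_iff, Nat.even_iff] using hao)
          rw [this] at heq
          exact hfp1 _ heq.symm
      · -- a + 1 < b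
        by_cases hpar : a % 2 = b % 2
        · -- same parity : step back
          have hkey : pmF σ1 σ2 x (a-1) = pmF σ1 σ2 x (b-1) := by
            rcases Nat.even_or_odd a with hae | hao
            · have hbe : Even b := by rw [Nat.even_iff] at hae ⊢; omega
              have hha := pmF_sigma1_even (σ2 := σ2) (x := x) h1 hae hapos
              have hhb := pmF_sigma1_even (σ2 := σ2) (x := x) h1 hbe (by omega)
              rw [← hha, ← hhb, heq]
            · have hbo : ¬ Even b := by
                rw [Nat.odd_iff] at hao; rw [Nat.even_iff] at *; omega
              have hao' : ¬ Even a := by rw [Nat.odd_iff] at hao; rw [Nat.even_iff]; omega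
              have hha := pmF_sigma2_odd (σ1 := σ1) (x := x) h2 hao' hapos
              have hhb := pmF_sigma2_odd (σ1 := σ1) (x := x) h2 hbo (by omega)
              rw [← hha, ← hhb, heq]
          exact ih (b-1) (by omega) (by omega) (a-1) (by omega) hkey
        · -- opposite parity : F(a+1) = F(b-1)
          have hne : a + 1 ≠ b - 1 := by omega
          have hlt' : a + 1 < b - 1 := by omega
          have hkey : pmF σ1 σ2 x (a+1) = pmF σ1 σ2 x (b-1) := by
            rcases Nat.even_or_odd a with hae | hao
            · -- a even, b odd
              have hbo : Even (b-1) := by rw [Nat.even_iff] at hae ⊢; omega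
              have hhb : pmF σ1 σ2 x (b-1) = σ2 (pmF σ1 σ2 x b) := by
                have := pmF_sigma2_even (σ1 := σ1) (x := x) h2 hbo
                rw [show b - 1 + 1 = b by omega] at this
                rw [← this, h2 _]
              rw [pmF_succ_even hae, hhb, ← heq]
            · -- a odd, b even
              have hao' : ¬ Even a := by rw [Nat.odd_iff] at hao; rw [Nat.even_iff]; omega
              have hbo : ¬ Even (b-1) := by rw [Nat.odd_iff] at hao; rw [Nat.even_iff]; omega
              have hhb : pmF σ1 σ2 x (b-1) = σ1 (pmF σ1 σ2 x b) := by
                have := pmF_sigma1_odd (σ2 := σ2) (x := x) h1 hbo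
                rw [show b - 1 + 1 = b by omega] at this
                rw [← this, h1 _]
              rw [pmF_succ_odd hao', hhb, ← heq]
          exact ih (b-1) (by omega) (by omega) (a+1) hlt' hkey

end Inj




/-- Pairing of indices along the cycle, case `i` odd:
`0 ↔ i`, `(1,2), (3,4), …, (i-2,i-1)`, `(i+1,i+2), …, (L-2,L-1)`. -/
def pOdd (i a : ℕ) : ℕ :=
  if a = 0 then i else if a = i then 0 else
  if a < i then (if a % 2 = 1 then a+1 else a-1)
  else (if a % 2 = 0 then a+1 else a-1)

/-- Pairing of indices along the cycle, case `i` even: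
`i ↔ L-1`, `(0,1), (2,3), …, (i-2,i-1)`, `(i+1,i+2), …, (L-3,L-2)`. -/
def pEven (i L a : ℕ) : ℕ :=
  if a = i then L-1 else if a = L-1 then i else
  if a < i then (if a % 2 = 0 then a+1 else a-1)
  else (if a % 2 = 1 then a+1 else a-1)

lemma pOdd_cases {i L a : ℕ} (hi : i % 2 = 1) (h3 : 3 ≤ i) (hiL : i < L) (hL : L % 2 = 0)
    (ha : a < L) :
    (a = 0 ∧ pOdd i a = i) ∨ (a = i ∧ pOdd i a = 0) ∨
    (0 < a ∧ a < i ∧ a % 2 = 1 ∧ pOdd i a = a + 1 ∧ a + 1 < i) ∨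
    (2 ≤ a ∧ a < i ∧ a % 2 = 0 ∧ pOdd i a = a - 1) ∨
    (i < a ∧ a % 2 = 0 ∧ pOdd i a = a + 1 ∧ a + 1 < L) ∨
    (i + 1 < a ∧ a % 2 = 1 ∧ pOdd i a = a - 1) := by
  unfold pOdd; split_ifs <;> omega

lemma pEven_cases {i L a : ℕ} (hi : i % 2 = 0) (h2 : 2 ≤ i) (hiL : i + 3 < L) (hL : L % 2 = 0)
    (ha : a < L) :
    (a = i ∧ pEven i L a = L - 1) ∨ (a = L - 1 ∧ pEven i L a = i) ∨
    (a < i ∧ a % 2 = 0 ∧ pEven i L a = a + 1 ∧ a + 1 < i) ∨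
    (0 < a ∧ a < i ∧ a % 2 = 1 ∧ pEven i L a = a - 1) ∨
    (i < a ∧ a < L - 1 ∧ a % 2 = 1 ∧ pEven i L a = a + 1 ∧ a + 1 < L - 1) ∨
    (i + 1 < a ∧ a < L - 1 ∧ a % 2 = 0 ∧ pEven i L a = a - 1) := by
  unfold pEven; split_ifs <;> omega

lemma pOdd_lt {i L a : ℕ} (hi : i % 2 = 1) (h3 : 3 ≤ i) (hiL : i < L) (hL : L % 2 = 0)
    (ha : a < L) : pOdd i a < L := by
  rcases pOdd_cases hi h3 hiL hL ha with h|h|h|h|h|h <;> omega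

lemma pOdd_invol {i L a : ℕ} (hi : i % 2 = 1) (h3 : 3 ≤ i) (hiL : i < L) (hL : L % 2 = 0)
    (ha : a < L) : pOdd i (pOdd i a) = a := by
  rcases pOdd_cases hi h3 hiL hL ha with h|h|h|h|h|h <;>
    rcases pOdd_cases hi h3 hiL hL (pOdd_lt hi h3 hiL hL ha) with h'|h'|h'|h'|h'|h' <;>
    omega

lemma pEven_lt {i L a : ℕ} (hi : i % 2 = 0) (h2 : 2 ≤ i) (hiL : i + 3 < L) (hL : L % 2 = 0)
    (ha : a < L) : pEven i L a < L := by
  rcases pEven_cases hi h2 hiL hL ha with h|h|h|h|h|h <;> omega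

lemma pEven_invol {i L a : ℕ} (hi : i % 2 = 0) (h2 : 2 ≤ i) (hiL : i + 3 < L) (hL : L % 2 = 0)
    (ha : a < L) : pEven i L (pEven i L a) = a := by
  rcases pEven_cases hi h2 hiL hL ha with h|h|h|h|h|h <;>
    rcases pEven_cases hi h2 hiL hL (pEven_lt hi h2 hiL hL ha) with h'|h'|h'|h'|h'|h' <;>
    omega


section Surgery

variable [Fintype V]

/-- The key surgery lemma: from perfect matchings of `G+xz` and `G+yw` (given as
involutions `σ1`, `σ2` with `σ1 x = z`), where `x-y, z-y` are edges of `G` but `x-z` and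
`y-w` are not, produce a perfect matching of `G` itself. -/
lemma surgery (G : SimpleGraph V) (σ1 σ2 : V → V) (x z y : V)
    (h1 : Involutive σ1) (h2 : Involutive σ2)
    (hfp1 : ∀ v, σ1 v ≠ v) (hfp2 : ∀ v, σ2 v ≠ v)
    (hσ1x : σ1 x = z)
    (hM1 : ∀ v, v ≠ x → v ≠ z → G.Adj v (σ1 v))
    (hM2 : ∀ v, v ≠ y → v ≠ σ2 y → G.Adj v (σ2 v))
    (hxy : G.Adj x y) (hzy : G.Adj z y)
    (hnxz : ¬ G.Adj x z) (hnyw : ¬ G.Adj y (σ2 y)) :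
    ∃ σ : V → V, Involutive σ ∧ ∀ v, G.Adj v (σ v) := by
  classical
  set w := σ2 y with hw
  have hxzne : x ≠ z := by
    intro h; exact hfp1 x (by rw [hσ1x, h])
  have hyx : y ≠ x := hxy.ne'
  have hyz : y ≠ z := hzy.ne'
  have hwx : w ≠ x := fun h => hnyw (h ▸ hxy.symm)
  have hwz : w ≠ z := fun h => hnyw (h ▸ hzy.symm)
  -- periodicity of τ = σ1 ∘ σ2 at x
  have hτinj : Function.Injective (σ1 ∘ σ2) := h1.injective.comp h2.injective
  have hper : ∃ n, 0 < n ∧ (σ1 ∘ σ2)^[n] x = x := by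
    obtain ⟨a, b, hne, heq⟩ := Finite.exists_ne_map_eq_of_infinite
      (fun n : ℕ => (σ1 ∘ σ2)^[n] x)
    rcases Nat.lt_or_ge a b with hab | hab
    · refine ⟨b - a, by omega, ?_⟩
      have : (σ1 ∘ σ2)^[a] ((σ1 ∘ σ2)^[b-a] x) = (σ1 ∘ σ2)^[a] x := by
        rw [← Function.iterate_add_apply]
        rw [show a + (b - a) = b by omega]
        exact heq.symm
      exact hτinj.iterate a this
    · have hba : b < a := by omega
      refine ⟨a - b, by omega, ?_⟩
      have : (σ1 ∘ σ2)^[b] ((σ1 ∘ σ2)^[a-b] x) = (σ1 ∘ σ2)^[b] x := by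
        rw [← Function.iterate_add_apply]
        rw [show b + (a - b) = a by omega]
        exact heq
      exact hτinj.iterate b this
  set J := Nat.find hper with hJdef
  have hJspec := Nat.find_spec hper
  have hJpos : 0 < J := hJspec.1
  have hJx : (σ1 ∘ σ2)^[J] x = x := hJspec.2
  have hJmin : ∀ n, 0 < n → n < J → (σ1 ∘ σ2)^[n] x ≠ x := fun n hn hnJ hx =>
    Nat.find_min hper hnJ ⟨hn, hx⟩
  set L := 2 * J with hLdef
  set F := pmF σ1 σ2 x with hFdef
  have hinj0 := pmF_inj h1 h2 hfp1 hfp2 hJpos hJx hJmin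
  have hne : ∀ a b, a < b → b < L → F a ≠ F b := fun a b hab hbL =>
    hinj0 b (by omega) a hab
  have hF0 : F 0 = x := rfl
  have hFL : F L = x := by rw [hFdef, hLdef, pmF_two_mul, hJx]
  have hL2 : 2 ≤ L := by omega
  have hLmod : L % 2 = 0 := by omega
  have hsE : ∀ (a : ℕ), a % 2 = 0 → F (a+1) = σ2 (F a) := fun a h =>
    pmF_succ_even (Nat.even_iff.mpr h)
  have hsO : ∀ (a : ℕ), a % 2 = 1 → F (a+1) = σ1 (F a) := fun a h =>
    pmF_succ_odd (by rw [Nat.even_iff]; omega)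
  have hFL1 : F (L-1) = z := by
    have h := hsO (L-1) (by omega)
    rw [show L - 1 + 1 = L by omega] at h
    have h' : σ1 (F L) = F (L-1) := by rw [h, h1 _]
    rw [hFL, hσ1x] at h'
    exact h'.symm
  -- membership in the cycle
  set mem : V → Prop := fun v => ∃ a, a < L ∧ F a = v with hmemdef
  have hmemx : mem x := ⟨0, by omega, rfl⟩
  have hmemz : mem z := ⟨L-1, by omega, hFL1⟩
  have hclose2 : ∀ v, mem v → mem (σ2 v) := by
    rintro v ⟨a, haL, rfl⟩
    rcases Nat.even_or_odd a with hae | hao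
    · have hap : a % 2 = 0 := Nat.even_iff.mp hae
      exact ⟨a+1, by omega, hsE a hap⟩
    · have hap : a % 2 = 1 := Nat.odd_iff.mp hao
      have h' := hsE (a-1) (by omega)
      rw [show a - 1 + 1 = a by omega] at h'
      exact ⟨a-1, by omega, by rw [h', h2 _]⟩
  have hclose1 : ∀ v, mem v → mem (σ1 v) := by
    rintro v ⟨a, haL, rfl⟩
    by_cases ha0 : a = 0
    · subst ha0; rw [hF0, hσ1x]; exact hmemz
    rcases Nat.even_or_odd a with hae | hao
    · have hap : a % 2 = 0 := Nat.even_iff.mp hae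
      have h' := hsO (a-1) (by omega)
      rw [show a - 1 + 1 = a by omega] at h'
      exact ⟨a-1, by omega, by rw [h', h1 _]⟩
    · have hap : a % 2 = 1 := Nat.odd_iff.mp hao
      by_cases haL1 : a = L - 1
      · subst haL1; rw [hFL1, ← hσ1x, h1 _]; exact hmemx
      · exact ⟨a+1, by omega, hsO a hap⟩
  have hidxF : ∀ b, b < L → ∀ (h : mem (F b)), Nat.find h = b := by
    intro b hbL h
    rcases Nat.lt_trichotomy (Nat.find h) b with hlt | heq | hgt
    · exact absurd (Nat.find_spec h).2 (hne _ b hlt hbL)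
    · exact heq
    · exact absurd (⟨hbL, rfl⟩ : _ ∧ _) (Nat.find_min h hgt)
  -- common construction from an index pairing
  have hconstr : ∀ p : ℕ → ℕ, (∀ a, a < L → p a < L) → (∀ a, a < L → p (p a) = a) →
      (∀ a, a < L → G.Adj (F a) (F (p a))) → (mem y) →
      ∃ σ : V → V, Involutive σ ∧ ∀ v, G.Adj v (σ v) := by
    intro p hpL hpp hadjp hmemy
    refine ⟨fun v => if h : mem v then F (p (Nat.find h)) else σ2 v, ?_, ?_⟩
    · intro v
      beta_reduce
      by_cases hv : mem v
      · rw [dif_pos hv]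
        have hfindL := (Nat.find_spec hv).1
        have hfindF := (Nat.find_spec hv).2
        have hpa : mem (F (p (Nat.find hv))) := ⟨p (Nat.find hv), hpL _ hfindL, rfl⟩
        rw [dif_pos hpa, hidxF _ (hpL _ hfindL) hpa, hpp _ hfindL, hfindF]
      · rw [dif_neg hv]
        have hnot : ¬ mem (σ2 v) := fun hc => hv (by have := hclose2 _ hc; rwa [h2 v] at this)
        rw [dif_neg hnot, h2 v]
    · intro v
      beta_reduce
      by_cases hv : mem v
      · rw [dif_pos hv]
        have hfindL := (Nat.find_spec hv).1
        have hfindF := (Nat.find_spec hv).2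
        have hA := hadjp _ hfindL
        rw [hfindF] at hA
        exact hA
      · rw [dif_neg hv]
        refine hM2 v (fun h => hv (h ▸ hmemy)) (fun h => hv ?_)
        rw [h]; exact hclose2 y hmemy
  by_cases hy' : mem y
  · -- y lies on the cycle through x,z
    obtain ⟨i, hiL, hFi⟩ := hy'
    have hi0 : i ≠ 0 := by
      intro h; exact hyx (by rw [← hFi, h, hF0])
    have hiL1 : i ≠ L - 1 := by
      intro h; exact hyz (by rw [← hFi, h, hFL1])
    rcases Nat.even_or_odd i with hie | hio
    · -- i even
      have hi2 : i % 2 = 0 := Nat.even_iff.mp hie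
      have hii2 : 2 ≤ i := by omega
      have hwF : w = F (i+1) := by
        rw [hw, ← hFi]
        exact (hsE i hi2).symm
      have hi3L : i + 3 < L := by
        have : i + 1 ≠ L - 1 := by
          intro h; exact hwz (by rw [hwF, h, hFL1])
        omega
      refine hconstr (pEven i L) (fun a ha => pEven_lt hi2 hii2 hi3L hLmod ha)
        (fun a ha => pEven_invol hi2 hii2 hi3L hLmod ha) ?_ ⟨i, hiL, hFi⟩
      intro a haL
      rcases pEven_cases hi2 hii2 hi3L hLmod haL with h|h|h|h|h|h
      · rw [h.2, h.1, hFi, hFL1]; exact hzy.symm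
      · rw [h.2, h.1, hFi, hFL1]; exact hzy
      · obtain ⟨hai, hap, heq, hlt⟩ := h
        rw [heq, hsE a hap]
        refine hM2 _ (fun hc => ?_) (fun hc => ?_)
        · rw [← hFi] at hc; exact hne a i hai hiL hc
        · rw [hwF] at hc; exact hne a (i+1) (by omega) (by omega) hc
      · obtain ⟨ha0, hai, hap, heq⟩ := h
        rw [heq]
        have hstep : F a = σ2 (F (a-1)) := by
          have h' := hsE (a-1) (by omega)
          rw [show a - 1 + 1 = a by omega] at h'
          exact h'
        rw [hstep]
        refine (hM2 _ (fun hc => ?_) (fun hc => ?_)).symm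
        · rw [← hFi] at hc; exact hne (a-1) i (by omega) hiL hc
        · rw [hwF] at hc; exact hne (a-1) (i+1) (by omega) (by omega) hc
      · obtain ⟨hia, haL1, hap, heq, hlt⟩ := h
        rw [heq, hsO a (by omega)]
        refine hM1 _ (fun hc => ?_) (fun hc => ?_)
        · rw [← hF0] at hc; exact hne 0 a (by omega) haL hc.symm
        · rw [← hFL1] at hc; exact hne a (L-1) (by omega) (by omega) hc
      · obtain ⟨hia, haL1, hap, heq⟩ := h
        rw [heq]
        have hstep : F a = σ1 (F (a-1)) := by
          have h' := hsO (a-1) (by omega)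
          rw [show a - 1 + 1 = a by omega] at h'
          exact h'
        rw [hstep]
        refine (hM1 _ (fun hc => ?_) (fun hc => ?_)).symm
        · rw [← hF0] at hc; exact hne 0 (a-1) (by omega) (by omega) hc.symm
        · rw [← hFL1] at hc; exact hne (a-1) (L-1) (by omega) (by omega) hc
    · -- i odd
      have hi2 : i % 2 = 1 := Nat.odd_iff.mp hio
      have hwF : w = F (i-1) := by
        have h' := hsE (i-1) (by omega)
        rw [show i - 1 + 1 = i by omega] at h'
        rw [hw, ← hFi, h', h2 _]
      have hi3 : 3 ≤ i := by
        have : i ≠ 1 := by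
          intro h; exact hwx (by rw [hwF, h]; exact hF0)
        omega
      refine hconstr (pOdd i) (fun a ha => pOdd_lt hi2 hi3 hiL hLmod ha)
        (fun a ha => pOdd_invol hi2 hi3 hiL hLmod ha) ?_ ⟨i, hiL, hFi⟩
      intro a haL
      rcases pOdd_cases hi2 hi3 hiL hLmod haL with h|h|h|h|h|h
      · rw [h.2, h.1, hF0, hFi]; exact hxy
      · rw [h.2, h.1, hF0, hFi]; exact hxy.symm
      · obtain ⟨ha0, hai, hap, heq, hlt⟩ := h
        rw [heq, hsO a (by omega)]
        refine hM1 _ (fun hc => ?_) (fun hc => ?_)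
        · rw [← hF0] at hc; exact hne 0 a (by omega) haL hc.symm
        · rw [← hFL1] at hc; exact hne a (L-1) (by omega) (by omega) hc
      · obtain ⟨ha2, hai, hap, heq⟩ := h
        rw [heq]
        have hstep : F a = σ1 (F (a-1)) := by
          have h' := hsO (a-1) (by omega)
          rw [show a - 1 + 1 = a by omega] at h'
          exact h'
        rw [hstep]
        refine (hM1 _ (fun hc => ?_) (fun hc => ?_)).symm
        · rw [← hF0] at hc; exact hne 0 (a-1) (by omega) (by omega) hc.symm
        · rw [← hFL1] at hc; exact hne (a-1) (L-1) (by omega) (by omega) hc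
      · obtain ⟨hia, hap, heq, hlt⟩ := h
        rw [heq, hsE a hap]
        refine hM2 _ (fun hc => ?_) (fun hc => ?_)
        · rw [← hFi] at hc; exact hne i a hia haL hc.symm
        · rw [hwF] at hc; exact hne (i-1) a (by omega) haL hc.symm
      · obtain ⟨hia, hap, heq⟩ := h
        rw [heq]
        have hstep : F a = σ2 (F (a-1)) := by
          have h' := hsE (a-1) (by omega)
          rw [show a - 1 + 1 = a by omega] at h'
          exact h'
        rw [hstep]
        refine (hM2 _ (fun hc => ?_) (fun hc => ?_)).symm
        · rw [← hFi] at hc; exact hne i (a-1) (by omega) (by omega) hc.symm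
        · rw [hwF] at hc; exact hne (i-1) (a-1) (by omega) (by omega) hc.symm
  · -- y is not on the cycle through x,z : use σ2 on the cycle, σ1 off it
    refine ⟨fun v => if h : mem v then σ2 v else σ1 v, ?_, ?_⟩
    · intro v
      beta_reduce
      by_cases hv : mem v
      · rw [dif_pos hv, dif_pos (hclose2 v hv), h2 v]
      · rw [dif_neg hv]
        have hnot : ¬ mem (σ1 v) := fun hc => hv (by have := hclose1 _ hc; rwa [h1 v] at this)
        rw [dif_neg hnot, h1 v]
    · intro v
      beta_reduce
      by_cases hv : mem v
      · rw [dif_pos hv]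
        refine hM2 v (fun h => hy' (h ▸ hv)) (fun h => hy' ?_)
        subst h
        have := hclose2 _ hv
        rwa [h2 y] at this
      · rw [dif_neg hv]
        exact hM1 v (fun h => hv (h ▸ hmemx)) (fun h => hv (h ▸ hmemz))

end Surgery

section Maximal

variable {V : Type*} [Fintype V]

lemma sup_edge_adj' (G : SimpleGraph V) {x z v w : V}
    (h : (G ⊔ SimpleGraph.edge x z).Adj v w)
    (h1 : ¬ (v = x ∧ w = z)) (h2 : ¬ (v = z ∧ w = x)) : G.Adj v w := by
  rcases h with h | h
  · exact h
  · rw [SimpleGraph.edge_adj] at h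
    rcases h.1 with ⟨rfl, rfl⟩ | ⟨rfl, rfl⟩
    · exact absurd ⟨rfl, rfl⟩ h1
    · exact absurd ⟨rfl, rfl⟩ h2

/-- In a maximal matching-free graph, adjacency is transitive at any non-universal vertex. -/
lemma maximal_matchingFree_trans (G : SimpleGraph V) (hfree : G.IsMatchingFree)
    (hmax : ∀ G', G' > G → ∃ M : SimpleGraph.Subgraph G', M.IsPerfectMatching)
    {x y z : V} (hxy : G.Adj x y) (hyz : G.Adj y z) (hxz : x ≠ z)
    (hy : ∃ t, t ≠ y ∧ ¬ G.Adj y t) : G.Adj x z := by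
  classical
  by_contra hnxz
  obtain ⟨t, hty, hnyt⟩ := hy
  have hyt : y ≠ t := Ne.symm hty
  have hedge1 : G < G ⊔ SimpleGraph.edge x z := by
    refine lt_of_le_of_ne le_sup_left (fun h => hnxz ?_)
    have : (G ⊔ SimpleGraph.edge x z).Adj x z :=
      Or.inr ((SimpleGraph.edge_adj x z x z).mpr ⟨Or.inl ⟨rfl, rfl⟩, hxz⟩)
    rwa [← h] at this
  have hedge2 : G < G ⊔ SimpleGraph.edge y t := by
    refine lt_of_le_of_ne le_sup_left (fun h => hnyt ?_)
    have : (G ⊔ SimpleGraph.edge y t).Adj y t :=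
      Or.inr ((SimpleGraph.edge_adj y t y t).mpr ⟨Or.inl ⟨rfl, rfl⟩, hyt⟩)
    rwa [← h] at this
  obtain ⟨M1, hM1pm⟩ := hmax _ hedge1
  obtain ⟨M2, hM2pm⟩ := hmax _ hedge2
  obtain ⟨σ1, hσ1inv, hσ1adj⟩ := involutive_of_pm hM1pm
  obtain ⟨σ2, hσ2inv, hσ2adj⟩ := involutive_of_pm hM2pm
  by_cases hσ1x : σ1 x = z
  · by_cases hσ2y : σ2 y = t
    · -- surgery
      have hfp1 : ∀ v, σ1 v ≠ v := fun v => (hσ1adj v).ne'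
      have hfp2 : ∀ v, σ2 v ≠ v := fun v => (hσ2adj v).ne'
      have hM1' : ∀ v, v ≠ x → v ≠ z → G.Adj v (σ1 v) :=
        fun v hvx hvz => sup_edge_adj' G (hσ1adj v)
          (fun hc => hvx hc.1) (fun hc => hvz hc.1)
      have hM2' : ∀ v, v ≠ y → v ≠ σ2 y → G.Adj v (σ2 v) := by
        intro v hvy hvt
        rw [hσ2y] at hvt
        exact sup_edge_adj' G (hσ2adj v) (fun hc => hvy hc.1) (fun hc => hvt hc.1)
      have hnyw : ¬ G.Adj y (σ2 y) := by rw [hσ2y]; exact hnyt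
      obtain ⟨σ, hσinv, hσadj⟩ := surgery G σ1 σ2 x z y hσ1inv hσ2inv hfp1 hfp2 hσ1x
        hM1' hM2' hxy hyz.symm hnxz hnyw
      obtain ⟨M, hM⟩ := pm_of_involutive G σ hσinv hσadj
      exact hfree M hM
    · -- M2 misses the edge y-t, so it is a PM of G
      have hσ2t : σ2 t ≠ y := by
        intro h
        apply hσ2y
        rw [← h, hσ2inv t]
      have hall : ∀ v, G.Adj v (σ2 v) := by
        intro v
        refine sup_edge_adj' G (hσ2adj v) (fun hc => ?_) (fun hc => ?_)
        · rw [hc.1] at hc; exact hσ2y hc.2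
        · rw [hc.1] at hc; exact hσ2t hc.2
      obtain ⟨M, hM⟩ := pm_of_involutive G σ2 hσ2inv hall
      exact hfree M hM
  · have hσ1z : σ1 z ≠ x := by
      intro h
      apply hσ1x
      rw [← h, hσ1inv z]
    have hall : ∀ v, G.Adj v (σ1 v) := by
      intro v
      refine sup_edge_adj' G (hσ1adj v) (fun hc => ?_) (fun hc => ?_)
      · rw [hc.1] at hc; exact hσ1x hc.2
      · rw [hc.1] at hc; exact hσ1z hc.2
    obtain ⟨M, hM⟩ := pm_of_involutive G σ1 hσ1inv hall
    exact hfree M hM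

end Maximal

section Structure

variable {V : Type*} [Fintype V] [DecidableEq V]

lemma sum_card_mod_two_of_odd (s : Finset (Finset V)) (h : ∀ P ∈ s, P.card % 2 = 1) :
    (∑ P ∈ s, P.card) % 2 = s.card % 2 := by
  rw [Finset.sum_nat_mod]
  rw [Finset.sum_congr rfl h]
  simp

lemma sum_card_mod_two_of_even (s : Finset (Finset V)) (h : ∀ P ∈ s, P.card % 2 = 0) :
    (∑ P ∈ s, P.card) % 2 = 0 := by
  rw [Finset.sum_nat_mod]
  rw [Finset.sum_congr rfl h]
  simp

/-- A matching-free graph on an even vertex set has a "Tutte-like" structure: a set `K`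
of vertices and more than `|K|` nonempty pairwise-disjoint classes covering `V \ K`,
each class closed under adjacency away from `K`. -/
lemma structure_of_matchingFree (G : SimpleGraph V) (hfree : G.IsMatchingFree)
    (hEven : Even (Fintype.card V)) :
    ∃ (K : Finset V) (comps : Finset (Finset V)),
      (∀ P ∈ comps, P.Nonempty) ∧
      (∀ P ∈ comps, ∀ Q ∈ comps, P ≠ Q → Disjoint P Q) ∧
      (comps.biUnion id = Finset.univ \ K) ∧
      (∀ P ∈ comps, ∀ v ∈ P, ∀ u, G.Adj v u → u ∈ P ∪ K) ∧
      (K.card + 2 ≤ comps.card) := by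
  classical
  obtain ⟨H, hGH, hHfree, hHmax⟩ := SimpleGraph.exists_maximal_isMatchingFree hfree
  set K : Finset V := Finset.univ.filter (fun v => ∀ w, w ≠ v → H.Adj v w) with hKdef
  have hKuniv : ∀ v ∈ K, ∀ w, w ≠ v → H.Adj v w := by
    intro v hv
    rw [hKdef, Finset.mem_filter] at hv
    exact hv.2
  have hnotK : ∀ v, v ∉ K → ∃ t, t ≠ v ∧ ¬ H.Adj v t := by
    intro v hv
    rw [hKdef, Finset.mem_filter] at hv
    push_neg at hv
    exact hv (Finset.mem_univ v)
  have htrans : ∀ {x y z : V}, H.Adj x y → H.Adj y z → x ≠ z → y ∉ K → H.Adj x z :=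
    fun hxy hyz hxz hyK =>
      maximal_matchingFree_trans H hHfree hHmax hxy hyz hxz (hnotK _ hyK)
  set cls : V → Finset V := fun v =>
    Finset.univ.filter (fun u => u ∉ K ∧ (u = v ∨ H.Adj v u)) with hclsdef
  have hclsmem' : ∀ v u, u ∈ cls v ↔ (u ∉ K ∧ (u = v ∨ H.Adj v u)) := by
    intro v u
    rw [hclsdef]
    simp
  have hclsself : ∀ v, v ∉ K → v ∈ cls v := by
    intro v hv; rw [hclsmem']; exact ⟨hv, Or.inl rfl⟩
  have hclssub : ∀ v, cls v ⊆ Finset.univ \ K := by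
    intro v u hu
    rw [hclsmem'] at hu
    simp [hu.1]
  have hsubrel : ∀ u v, u ∉ K → v ∉ K → (v = u ∨ H.Adj u v) → cls u ⊆ cls v := by
    intro u v hu hv huv x hx
    rw [hclsmem'] at hx ⊢
    obtain ⟨hxK, hxu⟩ := hx
    refine ⟨hxK, ?_⟩
    rcases huv with rfl | hadj
    · exact hxu
    · rcases hxu with rfl | hux
      · exact Or.inr hadj.symm
      · by_cases hxv : x = v
        · exact Or.inl hxv
        · exact Or.inr (htrans hadj.symm hux (Ne.symm hxv) hu)
  have hclseq : ∀ u v, u ∉ K → v ∉ K → (v = u ∨ H.Adj u v) → cls u = cls v := by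
    intro u v hu hv huv
    refine Finset.Subset.antisymm (hsubrel u v hu hv huv) (hsubrel v u hv hu ?_)
    rcases huv with rfl | h
    · exact Or.inl rfl
    · exact Or.inr h.symm
  set comps : Finset (Finset V) := (Finset.univ \ K).image cls with hcompsdef
  have hmemcomps : ∀ v, v ∉ K → cls v ∈ comps := by
    intro v hv
    rw [hcompsdef]
    exact Finset.mem_image_of_mem cls (by simp [hv])
  have hcompsform : ∀ P ∈ comps, ∃ v, v ∉ K ∧ P = cls v := by
    intro P hP
    rw [hcompsdef, Finset.mem_image] at hP
    obtain ⟨v, hv, hvP⟩ := hP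
    simp only [Finset.mem_sdiff, Finset.mem_univ, true_and] at hv
    exact ⟨v, hv, hvP.symm⟩
  have hcompuniq : ∀ x, x ∉ K → ∀ Q ∈ comps, x ∈ Q → Q = cls x := by
    intro x hx Q hQ hxQ
    obtain ⟨v, hv, rfl⟩ := hcompsform Q hQ
    rw [hclsmem'] at hxQ
    exact hclseq v x hv hx hxQ.2
  have hnonempty : ∀ P ∈ comps, P.Nonempty := by
    intro P hP
    obtain ⟨v, hv, rfl⟩ := hcompsform P hP
    exact ⟨v, hclsself v hv⟩
  have hdisj : ∀ P ∈ comps, ∀ Q ∈ comps, P ≠ Q → Disjoint P Q := by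
    intro P hP Q hQ hPQ
    rw [Finset.disjoint_left]
    intro x hxP hxQ
    have hx : x ∉ K := by
      obtain ⟨v, hv, rfl⟩ := hcompsform P hP
      exact ((hclsmem' v x).mp hxP).1
    exact hPQ ((hcompuniq x hx P hP hxP).trans (hcompuniq x hx Q hQ hxQ).symm)
  have hcover : comps.biUnion id = Finset.univ \ K := by
    apply Finset.Subset.antisymm
    · intro x hx
      rw [Finset.mem_biUnion] at hx
      obtain ⟨P, hP, hxP⟩ := hx
      obtain ⟨v, hv, rfl⟩ := hcompsform P hP
      exact hclssub v hxP
    · intro x hx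
      simp only [Finset.mem_sdiff, Finset.mem_univ, true_and] at hx
      rw [Finset.mem_biUnion]
      exact ⟨cls x, hmemcomps x hx, hclsself x hx⟩
  have hclique : ∀ P ∈ comps, ∀ a ∈ P, ∀ b ∈ P, a ≠ b → H.Adj a b := by
    intro P hP a ha b hb hab
    obtain ⟨v, hv, rfl⟩ := hcompsform P hP
    rw [hclsmem'] at ha hb
    rcases ha.2 with rfl | hva
    · rcases hb.2 with rfl | hvb
      · exact absurd rfl hab
      · exact hvb
    · rcases hb.2 with rfl | hvb
      · exact hva.symm
      · exact htrans hva.symm hvb hab hv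
  have hclosure : ∀ P ∈ comps, ∀ v ∈ P, ∀ u, G.Adj v u → u ∈ P ∪ K := by
    intro P hP v hvP u hadj
    have hadjH : H.Adj v u := hGH hadj
    by_cases huK : u ∈ K
    · exact Finset.mem_union_right _ huK
    · obtain ⟨v0, hv0, rfl⟩ := hcompsform P hP
      have hvK : v ∉ K := ((hclsmem' v0 v).mp hvP).1
      have hucls : u ∈ cls v := by
        rw [hclsmem']
        exact ⟨huK, Or.inr hadjH⟩
      have : cls v = cls v0 := (hcompuniq v hvK (cls v0) hP hvP).symm
      rw [← this]
      exact Finset.mem_union_left _ hucls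
  -- It remains to show K.card + 1 ≤ comps.card, via the odd classes.
  set odds : Finset (Finset V) := comps.filter (fun P => Odd P.card) with hoddsdef
  set evens : Finset (Finset V) := comps.filter (fun P => ¬ Odd P.card) with hevensdef
  have hsumcomps : ∑ P ∈ comps, P.card = Fintype.card V - K.card := by
    have h1 : (comps.biUnion id).card = ∑ P ∈ comps, P.card := by
      rw [Finset.card_biUnion]
      · simp
      · intro P hP Q hQ hPQ
        exact hdisj P hP Q hQ hPQ
    rw [← h1, hcover, Finset.card_sdiff_of_subset (Finset.subset_univ K), Finset.card_univ]
  have hsplit : ∑ P ∈ comps, P.card = (∑ P ∈ odds, P.card) + (∑ P ∈ evens, P.card) := by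
    rw [hoddsdef, hevensdef]
    exact (Finset.sum_filter_add_sum_filter_not comps _ _).symm
  have hoddsum : (∑ P ∈ odds, P.card) % 2 = odds.card % 2 := by
    apply sum_card_mod_two_of_odd
    intro P hP
    rw [hoddsdef, Finset.mem_filter] at hP
    exact Nat.odd_iff.mp hP.2
  have hevensum : (∑ P ∈ evens, P.card) % 2 = 0 := by
    apply sum_card_mod_two_of_even
    intro P hP
    rw [hevensdef, Finset.mem_filter] at hP
    rw [Nat.not_odd_iff_even] at hP
    exact Nat.even_iff.mp hP.2
  have hKcard : K.card ≤ Fintype.card V := by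
    rw [← Finset.card_univ]
    exact Finset.card_le_card (Finset.subset_univ K)
  have hmeven : Fintype.card V % 2 = 0 := Nat.even_iff.mp hEven
  have hparity : odds.card % 2 = K.card % 2 := by omega
  by_cases hcon : K.card + 2 ≤ odds.card
  · exact ⟨K, comps, hnonempty, hdisj, hcover, hclosure,
      le_trans hcon (Finset.card_le_card (Finset.filter_subset _ _))⟩
  exfalso
  push_neg at hcon
  have hcon' : odds.card ≤ K.card := by omega
  -- hcon : odds.card ≤ K.card ; build a perfect matching of H
  have hgexist : ∃ g : {P // P ∈ odds} → {x // x ∈ K}, Function.Injective g := by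
    have e1 := odds.equivFin
    have e2 := K.equivFin
    exact ⟨fun P => e2.symm (Fin.castLE hcon' (e1 P)),
      fun a b hab => by
        have := congrArg e2 hab
        simp only [Equiv.apply_symm_apply] at this
        exact e1.injective (Fin.castLE_injective hcon' this)⟩
  obtain ⟨g, hginj⟩ := hgexist
  set usedK : Finset V := odds.attach.image (fun O => (g O : V)) with husedKdef
  have husedsub : usedK ⊆ K := by
    intro x hx
    rw [husedKdef, Finset.mem_image] at hx
    obtain ⟨O, _, rfl⟩ := hx
    exact (g O).2
  set augmented : Finset (Finset V) :=
    odds.attach.image (fun O => insert ((g O : V)) (O : Finset V)) with haugdef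
  set rest : Finset V := K \ usedK with hrestdef
  set parts : Finset (Finset V) := evens ∪ augmented ∪ {rest} with hpartsdef
  -- basic membership helpers
  have hoddsK : ∀ (O : {P // P ∈ odds}), (O : Finset V) ⊆ Finset.univ \ K := by
    intro O
    obtain ⟨v, hv, hO⟩ := hcompsform O (Finset.mem_of_mem_filter _ O.2)
    rw [hO]
    exact hclssub v
  have hgnotin : ∀ (O : {P // P ∈ odds}), ((g O : V)) ∉ (O : Finset V) := by
    intro O hin
    have := hoddsK O hin
    simp only [Finset.mem_sdiff] at this
    exact this.2 (g O).2
  have hcompsnoK : ∀ P ∈ comps, ∀ x ∈ P, x ∉ K := by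
    intro P hP x hx
    obtain ⟨v, hv, rfl⟩ := hcompsform P hP
    exact ((hclsmem' v x).mp hx).1
  -- three part-kinds classify
  have hpartscases : ∀ Q ∈ parts, Q ∈ evens ∨ Q ∈ augmented ∨ Q = rest := by
    intro Q hQ
    rw [hpartsdef] at hQ
    simp only [Finset.mem_union, Finset.mem_singleton] at hQ
    tauto
  -- cover
  have hcoverparts : ∀ v : V, ∃! P, P ∈ parts ∧ v ∈ P := by
    intro v
    by_cases hvK : v ∈ K
    · by_cases hvu : v ∈ usedK
      · rw [husedKdef, Finset.mem_image] at hvu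
        obtain ⟨O, hO, hgO⟩ := hvu
        refine ⟨insert ((g O : V)) (O : Finset V), ⟨?_, ?_⟩, ?_⟩
        · rw [hpartsdef]
          exact Finset.mem_union_left _ (Finset.mem_union_right _
            (Finset.mem_image_of_mem _ hO))
        · rw [← hgO]; exact Finset.mem_insert_self _ _
        · rintro Q ⟨hQ, hvQ⟩
          rcases hpartscases Q hQ with hQe | hQa | hQr
          · exact absurd hvK (hcompsnoK Q (Finset.mem_of_mem_filter _ hQe) v hvQ)
          · rw [haugdef, Finset.mem_image] at hQa
            obtain ⟨O', _, rfl⟩ := hQa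
            rcases Finset.mem_insert.mp hvQ with hveq | hvin
            · have : g O' = g O := Subtype.ext (hveq.symm.trans hgO.symm)
              rw [hginj this]
            · exact absurd hvK (by
                have := hoddsK O' hvin
                simp only [Finset.mem_sdiff] at this
                exact this.2)
          · subst hQr
            rw [hrestdef, Finset.mem_sdiff] at hvQ
            refine absurd ?_ hvQ.2
            rw [husedKdef, Finset.mem_image]
            exact ⟨O, hO, hgO⟩
      · refine ⟨rest, ⟨?_, ?_⟩, ?_⟩
        · rw [hpartsdef]
          exact Finset.mem_union_right _ (Finset.mem_singleton_self _)
        · rw [hrestdef, Finset.mem_sdiff]; exact ⟨hvK, hvu⟩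
        · rintro Q ⟨hQ, hvQ⟩
          rcases hpartscases Q hQ with hQe | hQa | hQr
          · exact absurd hvK (hcompsnoK Q (Finset.mem_of_mem_filter _ hQe) v hvQ)
          · rw [haugdef, Finset.mem_image] at hQa
            obtain ⟨O', hO', rfl⟩ := hQa
            rcases Finset.mem_insert.mp hvQ with hveq | hvin
            · exact absurd (by
                rw [husedKdef, Finset.mem_image]
                exact ⟨O', hO', hveq.symm⟩) hvu
            · exact absurd hvK (by
                have := hoddsK O' hvin
                simp only [Finset.mem_sdiff] at this
                exact this.2)
          · rw [hQr]
    · -- v ∉ K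
      have hvcls : cls v ∈ comps := hmemcomps v hvK
      by_cases hvodd : Odd ((cls v).card)
      · have hvodds : cls v ∈ odds := by
          rw [hoddsdef, Finset.mem_filter]; exact ⟨hvcls, hvodd⟩
        set O : {P // P ∈ odds} := ⟨cls v, hvodds⟩ with hOdef
        refine ⟨insert ((g O : V)) (cls v), ⟨?_, ?_⟩, ?_⟩
        · rw [hpartsdef]
          refine Finset.mem_union_left _ (Finset.mem_union_right _ ?_)
          rw [haugdef, Finset.mem_image]
          exact ⟨O, Finset.mem_attach _ _, rfl⟩
        · exact Finset.mem_insert_of_mem (hclsself v hvK)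
        · rintro Q ⟨hQ, hvQ⟩
          rcases hpartscases Q hQ with hQe | hQa | hQr
          · rw [hevensdef, Finset.mem_filter] at hQe
            have := hcompuniq v hvK Q hQe.1 hvQ
            rw [this] at hQe
            exact absurd hvodd hQe.2
          · rw [haugdef, Finset.mem_image] at hQa
            obtain ⟨O', hO', rfl⟩ := hQa
            rcases Finset.mem_insert.mp hvQ with hveq | hvin
            · exact absurd ((hveq ▸ (g O').2 : v ∈ K)) hvK
            · have hOcomps : (O' : Finset V) ∈ comps :=
                Finset.mem_of_mem_filter _ O'.2
              have : (O' : Finset V) = cls v := hcompuniq v hvK _ hOcomps hvin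
              have hOO : O' = O := Subtype.ext (by rw [this, hOdef])
              rw [hOO]
          · subst hQr
            rw [hrestdef, Finset.mem_sdiff] at hvQ
            exact absurd hvQ.1 hvK
      · refine ⟨cls v, ⟨?_, hclsself v hvK⟩, ?_⟩
        · rw [hpartsdef]
          refine Finset.mem_union_left _ (Finset.mem_union_left _ ?_)
          rw [hevensdef, Finset.mem_filter]
          exact ⟨hvcls, hvodd⟩
        · rintro Q ⟨hQ, hvQ⟩
          rcases hpartscases Q hQ with hQe | hQa | hQr
          · exact hcompuniq v hvK Q (Finset.mem_of_mem_filter _ hQe) hvQ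
          · rw [haugdef, Finset.mem_image] at hQa
            obtain ⟨O', hO', rfl⟩ := hQa
            rcases Finset.mem_insert.mp hvQ with hveq | hvin
            · exact absurd ((hveq ▸ (g O').2 : v ∈ K)) hvK
            · have hOcomps : (O' : Finset V) ∈ comps :=
                Finset.mem_of_mem_filter _ O'.2
              have heq : (O' : Finset V) = cls v := hcompuniq v hvK _ hOcomps hvin
              have : Odd ((cls v).card) := by
                rw [← heq]
                exact (Finset.mem_filter.mp O'.2).2
              exact absurd this hvodd
          · subst hQr
            rw [hrestdef, Finset.mem_sdiff] at hvQ
            exact absurd hvQ.1 hvK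
    -- parity of rest
  have husedcard : usedK.card = odds.card := by
    rw [husedKdef]
    rw [Finset.card_image_of_injective _ (fun a b hab => hginj (Subtype.ext hab))]
    exact Finset.card_attach
  have hrestcard : rest.card = K.card - odds.card := by
    rw [hrestdef, Finset.card_sdiff_of_subset husedsub, husedcard]
  have hresteven : Even rest.card := by
    rw [hrestcard, Nat.even_iff]
    omega
  -- evenness of parts
  have hevenparts : ∀ P ∈ parts, Even P.card := by
    intro P hP
    rcases hpartscases P hP with hPe | hPa | hPr
    · rw [hevensdef, Finset.mem_filter, Nat.not_odd_iff_even] at hPe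
      exact hPe.2
    · rw [haugdef, Finset.mem_image] at hPa
      obtain ⟨O, _, rfl⟩ := hPa
      rw [Finset.card_insert_of_notMem (hgnotin O)]
      have : Odd ((O : Finset V)).card := (Finset.mem_filter.mp O.2).2
      rcases this with ⟨c, hc⟩
      exact ⟨c+1, by omega⟩
    · rw [hPr]; exact hresteven
  -- cliqueness of parts
  have hcliqueparts : ∀ P ∈ parts, ∀ a ∈ P, ∀ b ∈ P, a ≠ b → H.Adj a b := by
    intro P hP a ha b hb hab
    rcases hpartscases P hP with hPe | hPa | hPr
    · exact hclique P (Finset.mem_of_mem_filter _ hPe) a ha b hb hab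
    · rw [haugdef, Finset.mem_image] at hPa
      obtain ⟨O, _, rfl⟩ := hPa
      have hOcomps : (O : Finset V) ∈ comps := Finset.mem_of_mem_filter _ O.2
      rcases Finset.mem_insert.mp ha with rfl | hain
      · rcases Finset.mem_insert.mp hb with rfl | hbin
        · exact absurd rfl hab
        · exact hKuniv _ (g O).2 b (fun h => hab h.symm)
      · rcases Finset.mem_insert.mp hb with rfl | hbin
        · exact (hKuniv _ (g O).2 a (fun h => hab h)).symm
        · exact hclique _ hOcomps a hain b hbin hab
    · subst hPr
      rw [hrestdef, Finset.mem_sdiff] at ha hb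
      exact hKuniv a ha.1 b (fun h => hab h.symm)
  obtain ⟨σ, hσinv, hσadj⟩ := invol_of_partition H parts hcoverparts hevenparts hcliqueparts
  obtain ⟨M, hM⟩ := pm_of_involutive H σ hσinv hσadj
  exact hHfree M hM

end Structure

section Counting

variable {m : ℕ} (G : SimpleGraph (Fin m)) [DecidableRel G.Adj]

lemma edgesBetween_eq_sum (S T : Finset (Fin m)) :
    edgesBetween G S T = ∑ v ∈ S, (T.filter (fun u => G.Adj v u)).card := by
  unfold edgesBetween
  rw [Finset.card_filter, Finset.sum_product]
  apply Finset.sum_congr rfl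
  intro v _
  rw [Finset.card_filter]

lemma edgesBetween_le (S T : Finset (Fin m)) : edgesBetween G S T ≤ S.card * T.card := by
  unfold edgesBetween
  calc ((S ×ˢ T).filter fun p => G.Adj p.1 p.2).card ≤ (S ×ˢ T).card :=
        Finset.card_filter_le _ _
    _ = S.card * T.card := Finset.card_product S T

lemma degree_le_split (v : Fin m) (A B : Finset (Fin m))
    (h : ∀ u, G.Adj v u → u ∈ A ∪ B) :
    G.degree v ≤ (A.filter (fun u => G.Adj v u)).card + (B.filter (fun u => G.Adj v u)).card := by
  have h1 : G.neighborFinset v ⊆ (A ∪ B).filter (fun u => G.Adj v u) := by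
    intro u hu
    rw [SimpleGraph.mem_neighborFinset] at hu
    rw [Finset.mem_filter]
    exact ⟨h u hu, hu⟩
  calc G.degree v = (G.neighborFinset v).card := rfl
    _ ≤ ((A ∪ B).filter (fun u => G.Adj v u)).card := Finset.card_le_card h1
    _ = ((A.filter (fun u => G.Adj v u)) ∪ (B.filter (fun u => G.Adj v u))).card := by
        rw [Finset.filter_union]
    _ ≤ _ := Finset.card_union_le _ _

lemma filter_adj_card_lt {v : Fin m} {P : Finset (Fin m)} (hv : v ∈ P) :
    (P.filter (fun u => G.Adj v u)).card + 1 ≤ P.card := by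
  have h1 : P.filter (fun u => G.Adj v u) ⊆ P.erase v := by
    intro u hu
    rw [Finset.mem_filter] at hu
    exact Finset.mem_erase.mpr ⟨hu.2.ne', hu.1⟩
  have h2 := Finset.card_le_card h1
  rw [Finset.card_erase_of_mem hv] at h2
  have h3 : 1 ≤ P.card := Finset.card_pos.mpr ⟨v, hv⟩
  omega

lemma internal_bound {ρ ξ : ℝ} (hρ : 0 ≤ ρ) (hξ : 0 < ξ)
    (hUR : UpperRegular G ρ ξ) (S : Finset (Fin m)) :
    (∑ v ∈ S, ((S.filter (fun u => G.Adj v u)).card : ℝ)) ≤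
      (ρ + ξ) * S.card * S.card + 2 * ξ * m * S.card := by
  induction S using Finset.strongInduction with
  | _ S ih =>
    by_cases hsmall : (S.card : ℝ) ≤ 2 * ξ * m + 1
    · -- small set : trivial bound
      have hbound : ∀ v ∈ S, ((S.filter (fun u => G.Adj v u)).card : ℝ) ≤ (S.card : ℝ) - 1 := by
        intro v hv
        have := filter_adj_card_lt G hv
        have : ((S.filter (fun u => G.Adj v u)).card : ℝ) + 1 ≤ (S.card : ℝ) := by
          exact_mod_cast this
        linarith
      calc (∑ v ∈ S, ((S.filter (fun u => G.Adj v u)).card : ℝ))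
          ≤ ∑ v ∈ S, ((S.card : ℝ) - 1) := Finset.sum_le_sum hbound
        _ = S.card * ((S.card : ℝ) - 1) := by rw [Finset.sum_const, nsmul_eq_mul]
        _ ≤ S.card * (2 * ξ * m) := by
            apply mul_le_mul_of_nonneg_left (by linarith) (by positivity)
        _ = 2 * ξ * m * S.card := by ring
        _ ≤ (ρ + ξ) * S.card * S.card + 2 * ξ * m * S.card := by
            have h1 : (0:ℝ) ≤ (ρ + ξ) * S.card * S.card := by positivity
            linarith
    · -- split into halves
      push_neg at hsmall
      have hm0 : (0:ℝ) ≤ (m:ℝ) := Nat.cast_nonneg m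
      have hξm : (0:ℝ) ≤ ξ * m := by positivity
      have hcard2 : 2 ≤ S.card := by
        by_contra hc
        push_neg at hc
        have : (S.card : ℝ) ≤ 1 := by exact_mod_cast Nat.lt_succ_iff.mp hc
        nlinarith
      obtain ⟨S1, hS1sub, hS1card⟩ := Finset.exists_subset_card_eq (s := S) (n := S.card / 2)
        (Nat.div_le_self _ _)
      set S2 := S \ S1 with hS2def
      have hdisj : Disjoint S1 S2 := Finset.disjoint_sdiff
      have hS2card : S2.card = S.card - S.card / 2 := by
        rw [hS2def, Finset.card_sdiff_of_subset hS1sub, hS1card]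
      have hS1lt : S1 ⊂ S := by
        rw [Finset.ssubset_iff_subset_ne]
        refine ⟨hS1sub, fun h => ?_⟩
        rw [h] at hS1card
        omega
      have hS2lt : S2 ⊂ S := by
        rw [hS2def]
        apply Finset.sdiff_ssubset hS1sub
        rw [← Finset.card_pos, hS1card]
        omega
      have hunion : S = S1 ∪ S2 := by
        rw [hS2def, Finset.union_sdiff_of_subset hS1sub]
      have hcards : S1.card + S2.card = S.card := by
        rw [hS1card, hS2card]; omega
      have hd1 : S.card ≤ S.card / 2 * 2 + 1 := by omega
      have hd2 : S.card / 2 * 2 ≤ S.card := by omega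
      have hd1' : (S.card : ℝ) ≤ ((S.card / 2 : ℕ) : ℝ) * 2 + 1 := by exact_mod_cast hd1
      have hd2' : ((S.card / 2 : ℕ) : ℝ) * 2 ≤ (S.card : ℝ) := by exact_mod_cast hd2
      have hS1real : ξ * m ≤ (S1.card : ℝ) := by
        rw [hS1card]; linarith
      have hS2real : ξ * m ≤ (S2.card : ℝ) := by
        have hc : (S1.card : ℝ) + (S2.card : ℝ) = (S.card : ℝ) := by exact_mod_cast hcards
        rw [hS1card] at hc
        linarith
      have hEB : ∀ A B : Finset (Fin m), (edgesBetween G A B : ℝ) =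
          ∑ v ∈ A, ((B.filter (fun u => G.Adj v u)).card : ℝ) := by
        intro A B
        rw [edgesBetween_eq_sum]
        push_cast
        rfl
      have hfilt : ∀ v : Fin m, ((S.filter (fun u => G.Adj v u)).card : ℝ) =
          ((S1.filter (fun u => G.Adj v u)).card : ℝ)
          + ((S2.filter (fun u => G.Adj v u)).card : ℝ) := by
        intro v
        rw [show (S.filter (fun u => G.Adj v u)) =
            (S1.filter (fun u => G.Adj v u)) ∪ (S2.filter (fun u => G.Adj v u)) by
          rw [← Finset.filter_union, ← hunion]]
        rw [Finset.card_union_of_disjoint (Finset.disjoint_filter_filter hdisj)]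
        push_cast
        ring
      have hsplitdom : ∀ f : Fin m → ℝ, (∑ v ∈ S, f v) = (∑ v ∈ S1, f v) + (∑ v ∈ S2, f v) := by
        intro f
        rw [hunion, Finset.sum_union hdisj]
      have hsum : (∑ v ∈ S, ((S.filter (fun u => G.Adj v u)).card : ℝ)) =
          (∑ v ∈ S1, ((S1.filter (fun u => G.Adj v u)).card : ℝ))
          + (∑ v ∈ S2, ((S2.filter (fun u => G.Adj v u)).card : ℝ))
          + ((edgesBetween G S1 S2 : ℝ) + (edgesBetween G S2 S1 : ℝ)) := by
        rw [Finset.sum_congr rfl (fun v _ => hfilt v), Finset.sum_add_distrib,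
          hsplitdom (fun v => ((S1.filter (fun u => G.Adj v u)).card : ℝ)),
          hsplitdom (fun v => ((S2.filter (fun u => G.Adj v u)).card : ℝ)),
          hEB S1 S2, hEB S2 S1]
        ring
      have hreg12 : (edgesBetween G S1 S2 : ℝ) ≤ (ρ + ξ) * S1.card * S2.card :=
        hUR S1 S2 hdisj hS1real hS2real
      have hreg21 : (edgesBetween G S2 S1 : ℝ) ≤ (ρ + ξ) * S2.card * S1.card :=
        hUR S2 S1 hdisj.symm hS2real hS1real
      have hih1 := ih S1 hS1lt
      have hih2 := ih S2 hS2lt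
      have hc : (S1.card : ℝ) + (S2.card : ℝ) = (S.card : ℝ) := by exact_mod_cast hcards
      rw [hsum, ← hc]
      nlinarith [hih1, hih2, hreg12, hreg21]

end Counting

end RegPM

/-- An upper `(ρ, ξ)`-regular graph on an even number `m` of vertices with minimum degree at
least `3ρm/4` has a perfect matching. -/
theorem regular_graph_perfect_matching :
    ∀ ρ : ℝ, 0 < ρ → ρ ≤ 1 →
      ∃ ξ0 : ℝ, 0 < ξ0 ∧ ∀ ξ : ℝ, 0 < ξ → ξ ≤ ξ0 →
        ∃ m0 : ℕ, ∀ m : ℕ, m0 ≤ m → Even m →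
          ∀ (G : SimpleGraph (Fin m)) [DecidableRel G.Adj],
            UpperRegular G ρ ξ →
            (∀ v : Fin m, 3 * ρ * m / 4 ≤ (G.degree v : ℝ)) →
            ∃ M : SimpleGraph.Subgraph G, M.IsPerfectMatching := by
  intro ρ hρ0 hρ1
  refine ⟨ρ^2/100, by positivity, ?_⟩
  intro ξ hξ0 hξle
  refine ⟨⌈(6:ℝ)/(ρ*ξ)⌉₊ + 1, ?_⟩
  intro m hm0 hmeven G _ hUR hdeg
  classical
  by_contra hno
  push_neg at hno
  have hfree : G.IsMatchingFree := hno
  obtain ⟨K, comps, hne, hdisjc, hcover, hclosure, hkr⟩ :=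
    RegPM.structure_of_matchingFree G hfree (by simpa using hmeven)
  -- basic numeric facts
  have hmpos : 0 < m := by
    have : 1 ≤ m := le_trans (by omega) hm0
    omega
  have hmR : (0:ℝ) < m := by exact_mod_cast hmpos
  have hmrξ : 6 < (m:ℝ) * (ρ * ξ) := by
    have h1 : ((6:ℝ)/(ρ*ξ)) ≤ (⌈(6:ℝ)/(ρ*ξ)⌉₊ : ℝ) := Nat.le_ceil _
    have h2 : (⌈(6:ℝ)/(ρ*ξ)⌉₊ : ℝ) + 1 ≤ (m:ℝ) := by exact_mod_cast hm0
    have h3 : (6:ℝ)/(ρ*ξ) + 1 ≤ (m:ℝ) := by linarith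
    have h4 : (0:ℝ) < ρ * ξ := by positivity
    rw [div_add' _ _ _ (ne_of_gt h4), div_le_iff₀ h4] at h3
    nlinarith
  have hξρ' : ξ ≤ ρ/100 := le_trans hξle (by nlinarith)
  have hξm_le : ξ * m ≤ ρ * m/100 := by nlinarith
  have hinvξ : 1/ξ < (m:ℝ)*ρ/6 := by
    rw [div_lt_div_iff₀ hξ0 (by norm_num)]
    nlinarith
  -- cardinality bookkeeping
  have hbi : (comps.biUnion id).card = ∑ P ∈ comps, P.card := by
    rw [Finset.card_biUnion]
    · simp
    · exact fun P hP Q hQ hPQ => hdisjc P hP Q hQ hPQ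
  have hsum : ∑ P ∈ comps, P.card = m - K.card := by
    rw [← hbi, hcover, Finset.card_sdiff_of_subset (Finset.subset_univ K), Finset.card_univ,
      Fintype.card_fin]
  have hKle : K.card ≤ m := by
    have := Finset.card_le_card (Finset.subset_univ K)
    rwa [Finset.card_univ, Fintype.card_fin] at this
  have hrle : comps.card ≤ ∑ P ∈ comps, P.card := by
    calc comps.card = ∑ _P ∈ comps, 1 := by simp
      _ ≤ ∑ P ∈ comps, P.card :=
        Finset.sum_le_sum (fun P hP => Finset.card_pos.mpr (hne P hP))
  have hsumR : (∑ P ∈ comps, (P.card:ℝ)) ≤ (m:ℝ) := by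
    have h6 : ((∑ P ∈ comps, P.card : ℕ) : ℝ) ≤ (m:ℝ) := by
      rw [hsum]
      exact_mod_cast Nat.cast_le.mpr (Nat.sub_le m K.card)
    push_cast at h6
    exact h6
  have hrm : comps.card ≤ m - K.card := hsum ▸ hrle
  have hk2m : 2 * K.card + 2 ≤ m := by omega
  have hkhalf : (K.card : ℝ) ≤ (m:ℝ)/2 - 1 := by
    have : (2 * K.card + 2 : ℝ) ≤ (m:ℝ) := by exact_mod_cast hk2m
    linarith
  -- the edges-between identity, real version
  have hEB : ∀ A B : Finset (Fin m), (edgesBetween G A B : ℝ) =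
      ∑ v ∈ A, ((B.filter (fun u => G.Adj v u)).card : ℝ) := by
    intro A B
    rw [RegPM.edgesBetween_eq_sum]
    push_cast
    rfl
  -- uniform per-vertex degree split
  have hdegv : ∀ P ∈ comps, ∀ v ∈ P, (3*ρ*m/4 : ℝ) ≤
      ((P.filter (fun u => G.Adj v u)).card : ℝ)
      + ((K.filter (fun u => G.Adj v u)).card : ℝ) := by
    intro P hP v hv
    have h1 := RegPM.degree_le_split G v P K (fun u hu => hclosure P hP v hv u hu)
    have h2 : (G.degree v : ℝ) ≤ ((P.filter (fun u => G.Adj v u)).card : ℝ)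
        + ((K.filter (fun u => G.Adj v u)).card : ℝ) := by exact_mod_cast h1
    exact le_trans (hdeg v) h2
  by_cases hA : ∃ P ∈ comps, (P.card : ℝ) < ξ * m
  · -- CASE A : there is a small class
    obtain ⟨P0, hP0, hP0small⟩ := hA
    obtain ⟨v0, hv0⟩ := hne P0 hP0
    -- K is big
    have hkbig : 3*ρ*m/4 - ξ*m + 1 ≤ (K.card : ℝ) := by
      have h1 := hdegv P0 hP0 v0 hv0
      have h2 : ((P0.filter (fun u => G.Adj v0 u)).card : ℝ) + 1 ≤ (P0.card : ℝ) := by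
        exact_mod_cast RegPM.filter_adj_card_lt G hv0
      have h3 : ((K.filter (fun u => G.Adj v0 u)).card : ℝ) ≤ (K.card : ℝ) := by
        exact_mod_cast Finset.card_le_card (Finset.filter_subset _ _)
      linarith
    set smalls := comps.filter (fun P => (P.card : ℝ) < ξ * m) with hsmallsdef
    set bigs := comps \ smalls with hbigsdef
    have hsub : smalls ⊆ comps := by
      rw [hsmallsdef]; exact Finset.filter_subset _ _
    have hsplitcard : smalls.card + bigs.card = comps.card := by
      have hle := Finset.card_le_card hsub
      rw [hbigsdef, Finset.card_sdiff_of_subset hsub]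
      omega
    -- bigs is few
    have hbigsfew : (bigs.card : ℝ) * (ξ*m) ≤ (m:ℝ) := by
      have h1 : ∑ P ∈ bigs, (P.card:ℝ) ≥ ∑ _P ∈ bigs, ξ*m := by
        apply Finset.sum_le_sum
        intro P hP
        rw [hbigsdef, Finset.mem_sdiff, hsmallsdef, Finset.mem_filter] at hP
        push_neg at hP
        exact hP.2 hP.1
      rw [Finset.sum_const, nsmul_eq_mul] at h1
      have h2 : ∑ P ∈ bigs, (P.card:ℝ) ≤ (m:ℝ) := by
        have h3 : ∑ P ∈ bigs, P.card ≤ ∑ P ∈ comps, P.card :=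
          Finset.sum_le_sum_of_subset (by rw [hbigsdef]; exact Finset.sdiff_subset)
        have h4 : ((∑ P ∈ bigs, P.card : ℕ) : ℝ) ≤ ((∑ P ∈ comps, P.card : ℕ) : ℝ) := by
          exact_mod_cast h3
        push_cast at h4
        linarith [hsumR]
      linarith
    have hbigsfew' : (bigs.card : ℝ) ≤ 1/ξ := by
      rw [div_eq_inv_mul, ← mul_le_mul_iff_left₀ (show (0:ℝ) < ξ*m by positivity)]
      calc (bigs.card : ℝ) * (ξ*m) ≤ (m:ℝ) := hbigsfew
        _ = ξ⁻¹ * 1 * (ξ*m) := by field_simp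
    set Q := smalls.biUnion id with hQdef
    have hQcard : (smalls.card : ℝ) ≤ (Q.card : ℝ) := by
      have h1 : Q.card = ∑ P ∈ smalls, P.card := by
        rw [hQdef, Finset.card_biUnion]
        · simp
        · intro P hP Q' hQ' hPQ
          exact hdisjc P (Finset.mem_of_mem_filter _ hP) Q'
            (Finset.mem_of_mem_filter _ hQ') hPQ
      have h2 : smalls.card ≤ ∑ P ∈ smalls, P.card := by
        calc smalls.card = ∑ _P ∈ smalls, 1 := by simp
          _ ≤ _ := Finset.sum_le_sum
            (fun P hP => Finset.card_pos.mpr (hne P (Finset.mem_of_mem_filter _ hP)))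
      rw [h1]
      exact_mod_cast h2
    have hsmallsbig : (K.card : ℝ) + 2 - 1/ξ ≤ (smalls.card : ℝ) := by
      have h1 : (K.card : ℝ) + 2 ≤ (comps.card : ℝ) := by exact_mod_cast hkr
      have h2 : (comps.card : ℝ) = (smalls.card : ℝ) + (bigs.card : ℝ) := by
        exact_mod_cast hsplitcard.symm
      linarith
    have hQbig : ξ * m ≤ (Q.card : ℝ) := by nlinarith
    have hKbig : ξ * m ≤ (K.card : ℝ) := by nlinarith
    have hQK : Disjoint Q K := by
      rw [Finset.disjoint_left]
      intro x hxQ hxK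
      have : x ∈ comps.biUnion id := by
        rw [hQdef, Finset.mem_biUnion] at hxQ
        obtain ⟨P, hP, hxP⟩ := hxQ
        rw [Finset.mem_biUnion]
        exact ⟨P, Finset.mem_of_mem_filter _ hP, hxP⟩
      rw [hcover, Finset.mem_sdiff] at this
      exact this.2 hxK
    -- lower bound on edges between Q and K
    have hlow : (Q.card : ℝ) * (3*ρ*m/4 - ξ*m + 1) ≤ (edgesBetween G Q K : ℝ) := by
      rw [hEB]
      have h1 : ∀ v ∈ Q, (3*ρ*m/4 - ξ*m + 1 : ℝ) ≤
          ((K.filter (fun u => G.Adj v u)).card : ℝ) := by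
        intro v hv
        rw [hQdef, Finset.mem_biUnion] at hv
        obtain ⟨P, hP, hvP⟩ := hv
        have hPsmall : (P.card : ℝ) < ξ * m := (Finset.mem_filter.mp hP).2
        have hPc := Finset.mem_of_mem_filter _ hP
        have h2 := hdegv P hPc v hvP
        have h3 : ((P.filter (fun u => G.Adj v u)).card : ℝ) + 1 ≤ (P.card : ℝ) := by
          exact_mod_cast RegPM.filter_adj_card_lt G hvP
        linarith
      calc (Q.card : ℝ) * (3*ρ*m/4 - ξ*m + 1)
          = ∑ _v ∈ Q, (3*ρ*m/4 - ξ*m + 1 : ℝ) := by rw [Finset.sum_const, nsmul_eq_mul]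
        _ ≤ _ := Finset.sum_le_sum h1
    have hup : (edgesBetween G Q K : ℝ) ≤ (ρ + ξ) * Q.card * K.card :=
      hUR Q K hQK hQbig hKbig
    have hQpos : (0:ℝ) < Q.card := lt_of_lt_of_le (by positivity) hQbig
    have hfin : 3*ρ*m/4 - ξ*m + 1 ≤ (ρ + ξ) * ((m:ℝ)/2) := by
      have h1 : (ρ + ξ) * Q.card * K.card ≤ (ρ + ξ) * Q.card * ((m:ℝ)/2) := by
        apply mul_le_mul_of_nonneg_left (by linarith) (by positivity)
      have h2 : (Q.card : ℝ) * (3*ρ*m/4 - ξ*m + 1) ≤ (Q.card : ℝ) * ((ρ + ξ) * ((m:ℝ)/2)) := by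
        calc (Q.card : ℝ) * (3*ρ*m/4 - ξ*m + 1) ≤ (ρ + ξ) * Q.card * ((m:ℝ)/2) := by
              linarith
          _ = (Q.card : ℝ) * ((ρ + ξ) * ((m:ℝ)/2)) := by ring
      exact le_of_mul_le_mul_left (by linarith [h2]) hQpos
    nlinarith
  · -- CASE B : all classes are large
    push_neg at hA
    have hrfew : (comps.card : ℝ) ≤ 1/ξ := by
      have h1 : ∑ P ∈ comps, (P.card:ℝ) ≥ ∑ _P ∈ comps, ξ*m :=
        Finset.sum_le_sum (fun P hP => hA P hP)
      rw [Finset.sum_const, nsmul_eq_mul] at h1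
      have h2 : (∑ P ∈ comps, (P.card:ℝ)) ≤ (m:ℝ) := hsumR
      rw [div_eq_inv_mul, ← mul_le_mul_iff_left₀ (show (0:ℝ) < ξ*m by positivity)]
      calc (comps.card : ℝ) * (ξ*m) ≤ (m:ℝ) := by linarith
        _ = ξ⁻¹ * 1 * (ξ*m) := by field_simp
    have hKfew : (K.card : ℝ) ≤ 1/ξ := by
      have : (K.card : ℝ) + 2 ≤ (comps.card : ℝ) := by exact_mod_cast hkr
      linarith
    -- every class has more than half the vertices
    have hbig : ∀ P ∈ comps, (m:ℝ)/2 < (P.card : ℝ) := by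
      intro P hP
      by_contra hc
      push_neg at hc
      have hPpos : (0:ℝ) < P.card := lt_of_lt_of_le (by positivity) (hA P hP)
      -- degree sum over P
      have hds : (P.card : ℝ) * (3*ρ*m/4) ≤
          (∑ v ∈ P, ((P.filter (fun u => G.Adj v u)).card : ℝ))
          + (edgesBetween G P K : ℝ) := by
        rw [hEB]
        have h1 : ∀ v ∈ P, (3*ρ*m/4 : ℝ) ≤
            ((P.filter (fun u => G.Adj v u)).card : ℝ)
            + ((K.filter (fun u => G.Adj v u)).card : ℝ) := hdegv P hP
        calc (P.card : ℝ) * (3*ρ*m/4) = ∑ _v ∈ P, (3*ρ*m/4 : ℝ) := by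
              rw [Finset.sum_const, nsmul_eq_mul]
          _ ≤ ∑ v ∈ P, (((P.filter (fun u => G.Adj v u)).card : ℝ)
              + ((K.filter (fun u => G.Adj v u)).card : ℝ)) := Finset.sum_le_sum h1
          _ = _ := by rw [Finset.sum_add_distrib]
      have hint := RegPM.internal_bound G hρ0.le hξ0 hUR P
      have hePK : (edgesBetween G P K : ℝ) ≤ (P.card : ℝ) * (1/ξ) := by
        have h1 : (edgesBetween G P K : ℝ) ≤ (P.card : ℝ) * (K.card : ℝ) := by
          exact_mod_cast RegPM.edgesBetween_le G P K
        nlinarith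
      -- divide by P.card
      have hkey : 3*ρ*m/4 ≤ (ρ + ξ) * (P.card:ℝ) + 2*ξ*m + 1/ξ := by
        have h2 : (P.card : ℝ) * (3*ρ*m/4) ≤
            (P.card:ℝ) * ((ρ + ξ) * (P.card:ℝ) + 2*ξ*m + 1/ξ) := by
          calc (P.card : ℝ) * (3*ρ*m/4) ≤
              ((ρ + ξ) * P.card * P.card + 2*ξ*m*P.card) + (P.card : ℝ) * (1/ξ) := by
                linarith
            _ = (P.card:ℝ) * ((ρ + ξ) * (P.card:ℝ) + 2*ξ*m + 1/ξ) := by ring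
        exact le_of_mul_le_mul_left (by linarith [h2]) hPpos
      have hfin : 3*ρ*m/4 ≤ (ρ + ξ) * ((m:ℝ)/2) + 2*ξ*m + 1/ξ := by nlinarith
      nlinarith
    -- two distinct classes, each more than half: contradiction
    have hr2 : 1 < comps.card := by omega
    obtain ⟨P1, hP1, P2, hP2, hP12⟩ := Finset.one_lt_card.mp hr2
    have hsum2 : P1.card + P2.card ≤ ∑ P ∈ comps, P.card := by
      have h1 : ∑ P ∈ ({P1, P2} : Finset (Finset (Fin m))), P.card ≤ ∑ P ∈ comps, P.card := by
        apply Finset.sum_le_sum_of_subset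
        intro x hx
        rcases Finset.mem_insert.mp hx with rfl | hx
        · exact hP1
        · rw [Finset.mem_singleton] at hx
          subst hx
          exact hP2
      rwa [Finset.sum_pair hP12] at h1
    have hsum2' : (P1.card : ℝ) + (P2.card : ℝ) ≤ (m:ℝ) := by
      have h1 : ((P1.card + P2.card : ℕ) : ℝ) ≤ ((∑ P ∈ comps, P.card : ℕ) : ℝ) := by
        exact_mod_cast hsum2
      push_cast at h1
      linarith [hsumR]
    have h1 := hbig P1 hP1
    have h2 := hbig P2 hP2
    linarith
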